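/- Let n ≥ 1 and let G be a group equipped with a linear order ≤ invariant under left multiplication, containing elements a₁,…,aₙ, b₁,…,bₙ with a_{i+1} = b_i⁻¹ a_i b_i a_i for all i (indices modulo n). If 1 ≤ b_i⁻¹ a_i b_i for every i, then a₁ = a₂ = ⋯ = aₙ. -/

import Mathlib

/-- A step in Section 3 of the paper: in a group with a left-invariant
linear order containing elements `a i`, `b i` (indices in `ZMod n`) with
`a (i+1) = (b i)⁻¹ a i (b i) (a i)` for all `i`, if `1 ≤ (b i)⁻¹ (a i) (b i)`
for every `i`, then all the `a i` are equal. -/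
theorem stmt14 {G : Type*} [Group G] (n : ℕ) (hn : 1 ≤ n)
    (le : G → G → Prop)
    (hlin : IsLinearOrder G le)
    (hinv : ∀ f g h, le g h → le (f * g) (f * h))
    (a b : ZMod n → G)
    (rel1 : ∀ i : ZMod n, a (i + 1) = (b i)⁻¹ * a i * b i * a i)
    (hyp : ∀ i : ZMod n, le 1 ((b i)⁻¹ * a i * b i)) :
    ∀ i j : ZMod n, a i = a j := by
  haveI : NeZero n := ⟨by omega⟩
  have htrans : ∀ {x y z : G}, le x y → le y z → le x z :=
    fun h1 h2 => hlin.toIsPartialOrder.toIsPreorder.toIsTrans.trans _ _ _ h1 h2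
  have hrefl : ∀ x : G, le x x := hlin.toIsPartialOrder.toIsPreorder.toRefl.refl
  have hanti : ∀ {x y : G}, le x y → le y x → x = y :=
    fun h1 h2 => hlin.toIsPartialOrder.toAntisymm.antisymm _ _ h1 h2
  set c : ZMod n → G := fun i => (b i)⁻¹ * a i * b i with hc
  have hcpos : ∀ i, le 1 (c i) := hyp
  have hrel : ∀ i : ZMod n, a (i + 1) = c i * a i := by
    intro i; rw [rel1 i, hc]
  have pair : ∀ x y : G, le 1 x → le 1 y → x * y = 1 → x = 1 ∧ y = 1 := by
    intro x y hx hy hxy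
    have h1 : le (x * 1) (x * y) := hinv x 1 y hy
    rw [mul_one, hxy] at h1
    have hx1 : x = 1 := hanti h1 hx
    refine ⟨hx1, ?_⟩
    rw [hx1, one_mul] at hxy; exact hxy
  set p : ℕ → G := fun k => a (k : ZMod n) * (a 0)⁻¹ with hpdef
  have hp0 : p 0 = 1 := by simp [hpdef]
  have hpsucc : ∀ k : ℕ, p (k + 1) = c k * p k := by
    intro k
    simp only [hpdef]
    push_cast
    rw [hrel (k : ZMod n), mul_assoc]
  have hppos : ∀ k : ℕ, le 1 (p k) := by
    intro k
    induction k with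
    | zero => rw [hp0]; exact hrefl 1
    | succ k ih =>
      rw [hpsucc k]
      have h1 : le (c k * 1) (c k * p k) := hinv _ 1 _ ih
      rw [mul_one] at h1
      exact htrans (hcpos _) h1
  have hpn : p n = 1 := by simp [hpdef, ZMod.natCast_self]
  have hdown : ∀ k : ℕ, k ≤ n → p (n - k) = 1 := by
    intro k
    induction k with
    | zero => intro _; simpa using hpn
    | succ k ih =>
      intro hk
      have hk' : k ≤ n := by omega
      have heq : n - k = (n - (k + 1)) + 1 := by omega
      have h1 := ih hk'
      rw [heq, hpsucc] at h1
      exact (pair _ _ (hcpos _) (hppos _) h1).2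
  have hall : ∀ m : ℕ, m ≤ n → p m = 1 := by
    intro m hm
    have := hdown (n - m) (by omega)
    rwa [Nat.sub_sub_self hm] at this
  have ha0 : ∀ i : ZMod n, a i = a 0 := by
    intro i
    have hv : ((i.val : ℕ) : ZMod n) = i := ZMod.natCast_zmod_val i
    have hle : i.val ≤ n := le_of_lt (ZMod.val_lt i)
    have := hall i.val hle
    rw [hpdef] at this
    simp only [hv] at this
    rw [mul_inv_eq_one] at this
    exact this
  intro i j
  rw [ha0 i, ha0 j]
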